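/- For every integer m ≥ 0, the alternating multiple zeta value ζ(1̄, {1}_m) = Σ_{k_0 > k_1 > ⋯ > k_m ≥ 1} (-1)^{k_0} / (k_0 k_1 ⋯ k_m) equals (-1)^{m+1} (ln 2)^{m+1} / (m+1)!. -/

import Mathlib

open Filter
open Finset Topology

/-- Multiple harmonic number `ζ_n({1}_m)`. -/
noncomputable def mhn : ℕ → ℕ → ℝ
  | _, 0 => 1
  | n, m + 1 => ∑ j ∈ Finset.Icc 1 n, (1 / (j : ℝ)) * mhn (j - 1) m

lemma mhn_zero (n : ℕ) : mhn n 0 = 1 := rfl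

lemma mhn_succ (n m : ℕ) : mhn n (m + 1) = ∑ j ∈ Finset.Icc 1 n, (1 / (j : ℝ)) * mhn (j - 1) m :=
  rfl

lemma mhn_zero_succ (m : ℕ) : mhn 0 (m + 1) = 0 := by simp [mhn_succ]

lemma mhn_succ_left (n m : ℕ) :
    mhn (n + 1) (m + 1) = mhn n (m + 1) + 1 / ((n : ℝ) + 1) * mhn n m := by
  rw [mhn_succ, mhn_succ, Finset.sum_Icc_succ_top (by omega)]
  norm_num

lemma mhn_nonneg (m n : ℕ) : 0 ≤ mhn n m := by
  induction m generalizing n with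
  | zero => rw [mhn_zero]; norm_num
  | succ m ih =>
    rw [mhn_succ]
    exact Finset.sum_nonneg fun j hj => mul_nonneg (by positivity) (ih _)

lemma sum_Icc_reflect (N : ℕ) (g : ℕ → ℝ) :
    ∑ j ∈ Finset.Icc 1 N, g (N + 1 - j) = ∑ j ∈ Finset.Icc 1 N, g j := by
  refine Finset.sum_nbij' (fun j => N + 1 - j) (fun j => N + 1 - j) ?_ ?_ ?_ ?_ ?_ <;>
      simp only [Finset.mem_Icc] <;> intros
  · omega
  · omega
  · omega
  · omega
  · trivial

/-- Key convolution identity `B`. -/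
lemma mhn_B (N : ℕ) : ∀ m : ℕ,
    ∑ j ∈ Finset.Icc 1 N, (1 / (j : ℝ)) * mhn (N - j) m = (m + 1) * mhn N (m + 1) := by
  induction N with
  | zero => intro m; simp [mhn_zero_succ]
  | succ N ih =>
    intro m
    match m with
    | 0 => simp [mhn_zero, mhn_succ]
    | m + 1 =>
      have split : ∀ f : ℕ → ℝ, ∑ j ∈ Finset.Icc 1 (N + 1), f j
          = ∑ j ∈ Finset.Icc 1 N, f j + f (N + 1) := by
        intro f
        rw [Finset.sum_Icc_succ_top (by omega)]
      rw [split]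
      have e1 : ∀ j ∈ Finset.Icc 1 N,
          (1 / (j : ℝ)) * mhn (N + 1 - j) (m + 1)
          = (1 / (j : ℝ)) * mhn (N - j) (m + 1)
            + (1 / (j : ℝ)) * (1 / ((N + 1 - j : ℕ) : ℝ)) * mhn (N - j) m := by
        intro j hj
        simp only [Finset.mem_Icc] at hj
        have h1 : N + 1 - j = (N - j) + 1 := by omega
        rw [h1, mhn_succ_left]
        have h2 : ((N - j : ℕ) : ℝ) + 1 = ((N - j + 1 : ℕ) : ℝ) := by push_cast; ring
        rw [h2, ← h1]
        ring
      rw [Finset.sum_congr rfl e1, Finset.sum_add_distrib, ih (m + 1)]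
      have e2 : ∀ j ∈ Finset.Icc 1 N,
          (1 / (j : ℝ)) * (1 / ((N + 1 - j : ℕ) : ℝ)) * mhn (N - j) m
          = (1 / ((N : ℝ) + 1)) * ((1 / (j : ℝ)) * mhn (N - j) m)
            + (1 / ((N : ℝ) + 1)) * ((1 / ((N + 1 - j : ℕ) : ℝ)) * mhn (N - j) m) := by
        intro j hj
        simp only [Finset.mem_Icc] at hj
        have hj1 : (0 : ℝ) < (j : ℝ) := by exact_mod_cast Nat.lt_of_lt_of_le Nat.zero_lt_one hj.1
        have hj2 : ((N + 1 - j : ℕ) : ℝ) = (N : ℝ) + 1 - (j : ℝ) := by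
          push_cast [Nat.cast_sub (by omega : j ≤ N + 1)]; ring
        have hj3 : (0 : ℝ) < (N : ℝ) + 1 - (j : ℝ) := by
          rw [← hj2]; exact_mod_cast Nat.lt_of_lt_of_le Nat.zero_lt_one (by omega)
        rw [hj2]
        have hN1 : (0 : ℝ) < (N : ℝ) + 1 := by positivity
        field_simp
        ring
      rw [Finset.sum_congr rfl e2, Finset.sum_add_distrib, ← Finset.mul_sum, ← Finset.mul_sum,
        ih m]
      have e3 : ∑ j ∈ Finset.Icc 1 N, (1 / ((N + 1 - j : ℕ) : ℝ)) * mhn (N - j) m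
          = mhn N (m + 1) := by
        rw [mhn_succ]
        rw [← sum_Icc_reflect N (fun i => (1 / (i : ℝ)) * mhn (i - 1) m)]
        refine Finset.sum_congr rfl fun j hj => ?_
        simp only [Finset.mem_Icc] at hj
        have : N + 1 - j - 1 = N - j := by omega
        rw [this]
      rw [e3]
      have hlast : (1 / ((N + 1 : ℕ) : ℝ)) * mhn (N + 1 - (N + 1)) (m + 1) = 0 := by
        simp [mhn_zero_succ]
      rw [hlast, mhn_succ_left]
      push_cast
      ring

lemma sum_Icc_one (N : ℕ) (f : ℕ → ℝ) : ∑ j ∈ Finset.Icc 1 N, f j = ∑ i ∈ Finset.range N, f (i + 1) := by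
  rw [← Finset.Ico_add_one_right_eq_Icc, Finset.sum_Ico_eq_sum_range]
  simp [add_comm]

lemma sum_range_split (N : ℕ) (f : ℕ → ℝ) :
    ∑ k ∈ Finset.range (N + 2), f k = f 0 + ∑ k ∈ Finset.Icc 1 N, f k + f (N + 1) := by
  rw [Finset.sum_range_succ, Finset.sum_range_succ', sum_Icc_one]
  ring

lemma mhn_antidiag (m n : ℕ) (x : ℝ) :
    ∑ kl ∈ Finset.HasAntidiagonal.antidiagonal n,
      (x ^ kl.1 / (kl.1 : ℝ) * mhn (kl.1 - 1) m) * (x ^ kl.2 / (kl.2 : ℝ))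
    = (m + 2) * (x ^ n / (n : ℝ) * mhn (n - 1) (m + 1)) := by
  rw [Finset.Nat.sum_antidiagonal_eq_sum_range_succ_mk]
  match n with
  | 0 => simp
  | N + 1 =>
    rw [sum_range_split]
    have h0 : (x ^ 0 / ((0:ℕ) : ℝ) * mhn (0 - 1) m) * (x ^ (N + 1 - 0) / ((N + 1 - 0 : ℕ) : ℝ)) = 0 := by
      norm_num
    have hN : (x ^ (N+1) / ((N+1 : ℕ) : ℝ) * mhn (N + 1 - 1) m)
        * (x ^ (N + 1 - (N+1)) / ((N + 1 - (N+1) : ℕ) : ℝ)) = 0 := by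
      simp
    rw [h0, hN, zero_add, add_zero]
    have e1 : ∀ k ∈ Finset.Icc 1 N,
        (x ^ k / (k : ℝ) * mhn (k - 1) m) * (x ^ (N + 1 - k) / ((N + 1 - k : ℕ) : ℝ))
        = x ^ (N + 1) * ((1 / ((N:ℝ) + 1)) * ((1 / (k : ℝ)) * mhn (k - 1) m)
            + (1 / ((N:ℝ) + 1)) * ((1 / ((N + 1 - k : ℕ) : ℝ)) * mhn (k - 1) m)) := by
      intro k hk
      simp only [Finset.mem_Icc] at hk
      have hpow : x ^ k * x ^ (N + 1 - k) = x ^ (N + 1) := by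
        rw [← pow_add]; congr 1; omega
      have hk1 : (0 : ℝ) < (k : ℝ) := by exact_mod_cast Nat.lt_of_lt_of_le Nat.zero_lt_one hk.1
      have hj2 : ((N + 1 - k : ℕ) : ℝ) = (N : ℝ) + 1 - (k : ℝ) := by
        push_cast [Nat.cast_sub (by omega : k ≤ N + 1)]; ring
      have hj3 : (0 : ℝ) < (N : ℝ) + 1 - (k : ℝ) := by
        rw [← hj2]; exact_mod_cast Nat.lt_of_lt_of_le Nat.zero_lt_one (by omega)
      rw [hj2, ← hpow]
      field_simp
      ring
    rw [Finset.sum_congr rfl e1, ← Finset.mul_sum, Finset.sum_add_distrib,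
      ← Finset.mul_sum, ← Finset.mul_sum]
    have e2 : ∑ k ∈ Finset.Icc 1 N, (1 / (k : ℝ)) * mhn (k - 1) m = mhn N (m + 1) := by
      rw [mhn_succ]
    have e3 : ∑ k ∈ Finset.Icc 1 N, (1 / ((N + 1 - k : ℕ) : ℝ)) * mhn (k - 1) m
        = (m + 1) * mhn N (m + 1) := by
      rw [← mhn_B N m, ← sum_Icc_reflect N (fun i => (1 / (i : ℝ)) * mhn (N - i) m)]
      refine Finset.sum_congr rfl fun k hk => ?_
      simp only [Finset.mem_Icc] at hk
      have : N - (N + 1 - k) = k - 1 := by omega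
      rw [this]
    rw [e2, e3]
    have : ((N + 1 : ℕ) : ℝ) = (N : ℝ) + 1 := by push_cast; ring
    rw [Nat.add_sub_cancel, this]
    have hN1 : ((N:ℝ) + 1) ≠ 0 := by positivity
    field_simp
    ring

lemma mhn_le_pow (m : ℕ) : ∀ n : ℕ, mhn n m ≤ (n : ℝ) ^ m := by
  induction m with
  | zero => intro n; rw [mhn_zero, pow_zero]
  | succ m ih =>
    intro n
    rw [mhn_succ]
    calc ∑ j ∈ Finset.Icc 1 n, (1 / (j : ℝ)) * mhn (j - 1) m
        ≤ ∑ j ∈ Finset.Icc 1 n, (n : ℝ) ^ m := by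
          refine Finset.sum_le_sum fun j hj => ?_
          simp only [Finset.mem_Icc] at hj
          have h1 : (1 : ℝ) ≤ (j : ℝ) := by exact_mod_cast hj.1
          have h2 : mhn (j - 1) m ≤ ((j - 1 : ℕ) : ℝ) ^ m := ih _
          have h3 : ((j - 1 : ℕ) : ℝ) ^ m ≤ (n : ℝ) ^ m := by
            apply pow_le_pow_left₀ (by positivity)
            exact_mod_cast Nat.sub_le_of_le_add (by omega)
          calc (1 / (j : ℝ)) * mhn (j - 1) m ≤ 1 * ((n : ℝ) ^ m) := by
                apply mul_le_mul _ (h2.trans h3) (mhn_nonneg _ _) (by norm_num)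
                rw [div_le_one (by linarith)]; exact h1
            _ = (n : ℝ) ^ m := one_mul _
      _ = (n : ℝ) * (n : ℝ) ^ m := by
          rw [Finset.sum_const, Nat.card_Icc]; simp [nsmul_eq_mul]
      _ = (n : ℝ) ^ (m + 1) := by ring

lemma term_norm_le (m : ℕ) (x : ℝ) (n : ℕ) :
    ‖x ^ n / (n : ℝ) * mhn (n - 1) m‖ ≤ (n : ℝ) ^ m * |x| ^ n := by
  match n with
  | 0 => simp
  | N + 1 =>
    rw [norm_mul, norm_div, Real.norm_eq_abs, Real.norm_eq_abs, Real.norm_eq_abs, abs_pow]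
    have h1 : |((N + 1 : ℕ) : ℝ)| = ((N + 1 : ℕ) : ℝ) := abs_of_pos (by positivity)
    rw [h1, abs_of_nonneg (mhn_nonneg _ _)]
    have h2 : mhn (N + 1 - 1) m ≤ ((N + 1 : ℕ) : ℝ) ^ m := by
      refine (mhn_le_pow m _).trans ?_
      apply pow_le_pow_left₀ (by positivity)
      exact_mod_cast Nat.sub_le _ _
    calc |x| ^ (N + 1) / ((N + 1 : ℕ) : ℝ) * mhn (N + 1 - 1) m
        ≤ |x| ^ (N + 1) / 1 * (((N + 1 : ℕ) : ℝ) ^ m) := by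
          apply mul_le_mul _ h2 (mhn_nonneg _ _) (by positivity)
          apply div_le_div_of_nonneg_left (by positivity) one_pos
          exact_mod_cast Nat.succ_le_succ (Nat.zero_le N)
      _ = ((N + 1 : ℕ) : ℝ) ^ m * |x| ^ (N + 1) := by ring

lemma summable_norm_term (m : ℕ) {x : ℝ} (hx : |x| < 1) :
    Summable fun n : ℕ => ‖x ^ n / (n : ℝ) * mhn (n - 1) m‖ := by
  have hs : Summable fun n : ℕ => (n : ℝ) ^ m * |x| ^ n := by
    apply summable_pow_mul_geometric_of_norm_lt_one
    rwa [Real.norm_eq_abs, abs_abs]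
  exact hs.of_nonneg_of_le (fun n => norm_nonneg _) (term_norm_le m x)

lemma hasSum_log {x : ℝ} (hx : |x| < 1) :
    HasSum (fun n : ℕ => x ^ n / (n : ℝ)) (-Real.log (1 - x)) := by
  have h := Real.hasSum_pow_div_log_of_abs_lt_one hx
  have h2 : HasSum (fun n : ℕ => x ^ (n + 1) / (((n + 1 : ℕ)) : ℝ)) (-Real.log (1 - x)) := by
    convert h using 2 with n
    push_cast; ring
  have := (hasSum_nat_add_iff (f := fun n : ℕ => x ^ n / (n : ℝ)) 1).mp h2
  simpa using this

lemma hasSum_mhn (m : ℕ) : ∀ x : ℝ, |x| < 1 →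
    HasSum (fun n : ℕ => x ^ n / (n : ℝ) * mhn (n - 1) m)
      ((-Real.log (1 - x)) ^ (m + 1) / ((m + 1).factorial : ℝ)) := by
  induction m with
  | zero =>
    intro x hx
    simp only [mhn_zero, mul_one, zero_add, pow_one, Nat.factorial_one, Nat.cast_one, div_one]
    exact hasSum_log hx
  | succ m ih =>
    intro x hx
    have hf := ih x hx
    have hg := hasSum_log hx
    have hfs := summable_norm_term m hx
    have hgs : Summable fun n : ℕ => ‖x ^ n / (n : ℝ)‖ := by
      have := summable_norm_term 0 hx
      simpa [mhn_zero] using this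
    have key := tsum_mul_tsum_eq_tsum_sum_antidiagonal_of_summable_norm hfs hgs
    rw [hf.tsum_eq, hg.tsum_eq] at key
    have key2 : (-Real.log (1 - x)) ^ (m + 1) / ((m + 1).factorial : ℝ) * (-Real.log (1 - x))
        = ∑' n : ℕ, ((m : ℝ) + 2) * (x ^ n / (n : ℝ) * mhn (n - 1) (m + 1)) := by
      rw [key]
      exact tsum_congr fun n => mhn_antidiag m n x
    rw [tsum_mul_left] at key2
    have hsum : Summable fun n : ℕ => x ^ n / (n : ℝ) * mhn (n - 1) (m + 1) :=
      (summable_norm_term (m + 1) hx).of_norm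
    have hm2 : ((m : ℝ) + 2) ≠ 0 := by positivity
    have hval : (∑' n : ℕ, x ^ n / (n : ℝ) * mhn (n - 1) (m + 1))
        = (-Real.log (1 - x)) ^ (m + 2) / ((m + 2).factorial : ℝ) := by
      have hfac : ((m + 2).factorial : ℝ) = ((m : ℝ) + 2) * ((m + 1).factorial : ℝ) := by
        rw [show m + 2 = (m + 1) + 1 by ring, Nat.factorial_succ]
        push_cast; ring
      have hfp : ((m + 1).factorial : ℝ) ≠ 0 := by
        exact_mod_cast Nat.factorial_ne_zero (m + 1)
      have h1 : (∑' n : ℕ, x ^ n / (n : ℝ) * mhn (n - 1) (m + 1))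
          = (-Real.log (1 - x)) ^ (m + 1) / ((m + 1).factorial : ℝ) * (-Real.log (1 - x))
            / ((m : ℝ) + 2) := by
        rw [eq_div_iff hm2, mul_comm, ← key2]
      rw [h1, div_mul_eq_mul_div, ← pow_succ, div_div]
      congr 1
      rw [hfac]
      ring
    have := hsum.hasSum
    rw [hval] at this
    convert this using 2 <;> ring_nf

lemma Hs_succ (N : ℕ) : mhn (N + 1) 1 = mhn N 1 + 1 / ((N : ℝ) + 1) := by
  rw [mhn_succ_left, mhn_zero, mul_one]

lemma Hs_zero : mhn 0 1 = 0 := mhn_zero_succ 0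

lemma Hs_tendsto : Tendsto (fun N : ℕ => mhn N 1) atTop atTop := by
  have he : ∀ N : ℕ, mhn N 1 = ∑ i ∈ Finset.range N, 1 / ((i : ℝ) + 1) := by
    intro N
    rw [mhn_succ, sum_Icc_one]
    refine Finset.sum_congr rfl fun i _ => ?_
    rw [mhn_zero, mul_one]
    push_cast; ring
  simp only [he]
  exact Real.tendsto_sum_range_one_div_nat_succ_atTop

/-- `(a+d)^(k+1) ≥ a^(k+1) + (k+1) a^k d`. -/
lemma pow_add_lb (a d : ℝ) (ha : 0 ≤ a) (hd : 0 ≤ d) :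
    ∀ k : ℕ, a ^ (k + 1) + (k + 1) * a ^ k * d ≤ (a + d) ^ (k + 1) := by
  intro k
  induction k with
  | zero => simp
  | succ k ih =>
    have key : (0:ℝ) ≤ ((k:ℝ) + 1) * (a ^ k * d * d) := by positivity
    have e := mul_le_mul_of_nonneg_right ih (by positivity : (0:ℝ) ≤ a + d)
    simp only [pow_succ] at e ⊢
    push_cast at e ⊢
    nlinarith [key, e]

/-- `b^(k+1) - a^(k+1) ≤ (k+1) b^k (b-a)` for `0 ≤ a ≤ b`. -/
lemma pow_sub_ub (a b : ℝ) (ha : 0 ≤ a) (hab : a ≤ b) :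
    ∀ k : ℕ, b ^ (k + 1) - a ^ (k + 1) ≤ (k + 1) * b ^ k * (b - a) := by
  intro k
  induction k with
  | zero => simp
  | succ k ih =>
    have hb : 0 ≤ b := ha.trans hab
    have hpow : a ^ (k+1) ≤ b ^ (k+1) := pow_le_pow_left₀ ha hab _
    have e1 := mul_le_mul_of_nonneg_left ih hb
    have e2 := mul_le_mul_of_nonneg_right hpow (sub_nonneg.mpr hab)
    simp only [pow_succ] at e1 e2 ⊢
    push_cast at e1 e2 ⊢
    nlinarith [e1, e2]

/-- Upper bound: `mhn N m ≤ (H_N)^m / m!`. -/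
lemma mhn_ub (m : ℕ) : ∀ N : ℕ, mhn N m ≤ (mhn N 1) ^ m / (m.factorial : ℝ) := by
  match m with
  | 0 => intro N; simp [mhn_zero]
  | m + 1 =>
    intro N
    induction N with
    | zero => simp [mhn_zero_succ, Hs_zero]
    | succ N ih =>
      have hH : 0 ≤ mhn N 1 := mhn_nonneg _ _
      have hd : (0:ℝ) ≤ 1 / ((N:ℝ) + 1) := by positivity
      have hfp : (0:ℝ) < ((m+1).factorial : ℝ) := by
        exact_mod_cast Nat.factorial_pos (m+1)
      have hfp' : (0:ℝ) < (m.factorial : ℝ) := by exact_mod_cast Nat.factorial_pos m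
      have hfac : ((m+1).factorial : ℝ) = ((m:ℝ)+1) * (m.factorial : ℝ) := by
        rw [Nat.factorial_succ]; push_cast; ring
      rw [mhn_succ_left, Hs_succ]
      have hub2 : mhn N m ≤ (mhn N 1) ^ m / (m.factorial : ℝ) := mhn_ub m N
      have hlb := pow_add_lb (mhn N 1) (1 / ((N:ℝ)+1)) hH hd m
      calc mhn N (m+1) + 1 / ((N:ℝ)+1) * mhn N m
          ≤ (mhn N 1) ^ (m+1) / ((m+1).factorial : ℝ)
            + 1 / ((N:ℝ)+1) * ((mhn N 1) ^ m / (m.factorial : ℝ)) := by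
            refine add_le_add ih ?_
            exact mul_le_mul_of_nonneg_left hub2 hd
        _ ≤ (mhn N 1 + 1 / ((N:ℝ)+1)) ^ (m+1) / ((m+1).factorial : ℝ) := by
            have h6 : 1 / ((N:ℝ)+1) * ((mhn N 1) ^ m / (m.factorial : ℝ))
                = (((m:ℝ)+1) * (mhn N 1) ^ m * (1 / ((N:ℝ)+1))) / ((m+1).factorial : ℝ) := by
              rw [hfac]
              field_simp
            rw [h6, ← add_div, div_le_div_iff₀ hfp hfp]
            apply mul_le_mul_of_nonneg_right _ (le_of_lt hfp)
            push_cast at hlb ⊢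
            linarith [hlb]

/-- Lower bound: `max (H_N - m) 0 ^ m ≤ m! * mhn N m`. -/
lemma mhn_lb : ∀ m : ℕ, ∀ N : ℕ,
    (max (mhn N 1 - m) 0) ^ m ≤ (m.factorial : ℝ) * mhn N m := by
  intro m
  induction m with
  | zero => intro N; simp [mhn_zero]
  | succ m ihm =>
    intro N
    induction N with
    | zero =>
      rw [Hs_zero, mhn_zero_succ, mul_zero]
      have hcast : (0:ℝ) - ((m + 1 : ℕ) : ℝ) ≤ 0 := by
        have := Nat.cast_nonneg (α := ℝ) (m + 1); linarith
      rw [max_eq_right hcast, zero_pow (by omega : m + 1 ≠ 0)]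
    | succ N ihN =>
      set t := mhn N 1 with ht
      set d := 1 / ((N:ℝ) + 1) with hdd
      have hd0 : 0 ≤ d := by positivity
      have hd1 : d ≤ 1 := by rw [hdd]; rw [div_le_one (by positivity)]; push_cast; linarith
      set a := max (t - ((m + 1 : ℕ) : ℝ)) 0 with ha
      set a' := max (t + d - ((m + 1 : ℕ) : ℝ)) 0 with ha'
      set c := max (t - (m:ℝ)) 0 with hc
      have ha0 : 0 ≤ a := le_max_right _ _
      have ha'0 : 0 ≤ a' := le_max_right _ _
      have hc0 : 0 ≤ c := le_max_right _ _
      have haa' : a ≤ a' := max_le_max (by push_cast; linarith) le_rfl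
      have ha'c : a' ≤ c := max_le_max (by push_cast; linarith) le_rfl
      have ha'ad : a' ≤ a + d := by
        rw [ha', ha]
        rcases le_total (t - ((m + 1 : ℕ) : ℝ)) 0 with h | h
        · rw [max_eq_right h]
          rcases le_total (t + d - ((m + 1 : ℕ) : ℝ)) 0 with h2 | h2
          · rw [max_eq_right h2]; linarith
          · rw [max_eq_left h2]; linarith
        · rw [max_eq_left h, max_eq_left (by linarith)]; linarith
      have hfac : (((m+1).factorial : ℕ) : ℝ) = ((m:ℝ)+1) * (m.factorial : ℝ) := by
        rw [Nat.factorial_succ]; push_cast; ring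
      have step1 : a' ^ (m+1) - a ^ (m+1) ≤ ((m:ℝ)+1) * c ^ m * d := by
        have h1 := pow_sub_ub a a' ha0 haa' m
        have h2 : a' ^ m ≤ c ^ m := pow_le_pow_left₀ ha'0 ha'c m
        have h3 : a' - a ≤ d := by linarith
        have h4 : ((m:ℝ)+1) * a' ^ m * (a' - a) ≤ ((m:ℝ)+1) * c ^ m * d := by
          apply mul_le_mul
          · exact mul_le_mul_of_nonneg_left h2 (by positivity)
          · exact h3
          · linarith
          · positivity
        push_cast at h1
        linarith
      have hHsucc : mhn (N+1) 1 = t + d := Hs_succ N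
      have hgoal_a' : max (mhn (N+1) 1 - ((m + 1 : ℕ) : ℝ)) 0 = a' := by rw [hHsucc]
      have hlbN := ihm N
      have hstep : a' ^ (m+1)
          ≤ (((m+1).factorial : ℕ) : ℝ) * mhn N (m+1)
            + ((m:ℝ)+1) * ((m.factorial : ℝ) * mhn N m) * d := by
        have : a ^ (m+1) ≤ (((m+1).factorial : ℕ) : ℝ) * mhn N (m+1) := ihN
        have h5 : ((m:ℝ)+1) * c ^ m * d ≤ ((m:ℝ)+1) * ((m.factorial : ℝ) * mhn N m) * d := by
          apply mul_le_mul_of_nonneg_right _ hd0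
          exact mul_le_mul_of_nonneg_left hlbN (by positivity)
        linarith
      have hfin : mhn (N+1) (m+1) = mhn N (m+1) + d * mhn N m := mhn_succ_left N m
      rw [hgoal_a', hfin]
      refine hstep.trans (le_of_eq ?_)
      rw [hfac]
      ring

/-- If the harmonic number is large enough, `mhn N m ≤ mhn N (m+1)`. -/
lemma mhn_level_mono (m N : ℕ) (h : ((m:ℝ) + 1) * 2 ^ (m + 1) ≤ mhn N 1) :
    mhn N m ≤ mhn N (m + 1) := by
  set t := mhn N 1 with ht
  have h2 : (2:ℝ) ≤ 2 ^ (m + 1) := by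
    calc (2:ℝ) = 2 ^ 1 := (pow_one 2).symm
    _ ≤ 2 ^ (m + 1) := pow_le_pow_right₀ one_le_two (by omega)
  have hm1 : (1:ℝ) ≤ (m:ℝ) + 1 := by have := Nat.cast_nonneg (α := ℝ) m; linarith
  have ht2 : 2 * ((m:ℝ) + 1) ≤ t := by nlinarith
  have ht0 : (0:ℝ) < t := by nlinarith
  have hfp : (0:ℝ) < (m.factorial : ℝ) := by exact_mod_cast Nat.factorial_pos m
  have hfp1 : (0:ℝ) < ((m+1).factorial : ℝ) := by exact_mod_cast Nat.factorial_pos (m+1)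
  have hfac : ((m+1).factorial : ℝ) = ((m:ℝ)+1) * (m.factorial : ℝ) := by
    rw [Nat.factorial_succ]; push_cast; ring
  have hub := mhn_ub m N
  have hlb := mhn_lb (m+1) N
  have hmax : max (t - ((m+1:ℕ):ℝ)) 0 = t - ((m:ℝ)+1) := by
    push_cast
    exact max_eq_left (by linarith)
  rw [hmax] at hlb
  -- t^m / m! ≤ (t/2)^(m+1) / (m+1)!
  have hmid : t ^ m / (m.factorial : ℝ) ≤ (t / 2) ^ (m + 1) / ((m+1).factorial : ℝ) := by
    rw [div_pow, div_div, div_le_div_iff₀ hfp (by positivity)]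
    have htm : (0:ℝ) ≤ t ^ m := by positivity
    calc t ^ m * (2 ^ (m+1) * ((m+1).factorial : ℝ))
        = (2 ^ (m+1) * ((m:ℝ)+1)) * (t ^ m * (m.factorial : ℝ)) := by rw [hfac]; ring
      _ ≤ t * (t ^ m * (m.factorial : ℝ)) := by
          apply mul_le_mul_of_nonneg_right _ (by positivity)
          nlinarith
      _ = t ^ (m+1) * (m.factorial : ℝ) := by rw [pow_succ]; ring
  have hhalf : (t / 2) ^ (m + 1) ≤ (t - ((m:ℝ)+1)) ^ (m + 1) := by
    apply pow_le_pow_left₀ (by positivity)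
    linarith
  calc mhn N m ≤ t ^ m / (m.factorial : ℝ) := hub
    _ ≤ (t / 2) ^ (m + 1) / ((m+1).factorial : ℝ) := hmid
    _ ≤ (t - ((m:ℝ)+1)) ^ (m + 1) / ((m+1).factorial : ℝ) :=
        (div_le_div_iff_of_pos_right hfp1).mpr hhalf
    _ ≤ mhn N (m + 1) := by
        rw [div_le_iff₀ hfp1]
        linarith [hlb]

lemma Hs_le_log : ∀ N : ℕ, 1 ≤ N → mhn N 1 ≤ 1 + Real.log N := by
  intro N
  induction N with
  | zero => omega
  | succ N ih =>
    intro _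
    rcases Nat.eq_zero_or_pos N with h | h
    · subst h
      rw [Hs_succ, Hs_zero]
      norm_num [Real.log_one]
    · have hN0 : (0:ℝ) < (N:ℝ) := by exact_mod_cast h
      have key := Real.log_le_sub_one_of_pos (show (0:ℝ) < (N:ℝ)/((N:ℝ)+1) by positivity)
      rw [Real.log_div (by positivity) (by positivity)] at key
      have hdiff : (N:ℝ)/((N:ℝ)+1) - 1 = -(1/((N:ℝ)+1)) := by field_simp; ring
      rw [hdiff] at key
      have := ih h
      rw [Hs_succ]
      push_cast
      linarith

lemma b_tendsto (m : ℕ) : Tendsto (fun n : ℕ => mhn (n - 1) m / (n : ℝ)) atTop (𝓝 0) := by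
  have h1 := Real.tendsto_pow_log_div_mul_add_atTop 1 0 m one_ne_zero
  simp only [one_mul, add_zero] at h1
  have h2 : Tendsto (fun n : ℕ => Real.log n ^ m / (n : ℝ)) atTop (𝓝 0) :=
    h1.comp tendsto_natCast_atTop_atTop
  have h3 : Tendsto (fun n : ℕ => (2:ℝ)^m * (Real.log n ^ m / (n : ℝ))) atTop (𝓝 0) := by
    have := h2.const_mul ((2:ℝ)^m)
    simpa using this
  apply tendsto_of_tendsto_of_tendsto_of_le_of_le' tendsto_const_nhds h3
  · filter_upwards with n
    exact div_nonneg (mhn_nonneg _ _) (Nat.cast_nonneg n)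
  · filter_upwards [eventually_ge_atTop 3] with n hn
    have hn0 : (0:ℝ) < (n:ℝ) := by exact_mod_cast (by omega : 0 < n)
    have hlog1 : (1:ℝ) ≤ Real.log n := by
      rw [Real.le_log_iff_exp_le hn0]
      calc Real.exp 1 ≤ 2.7182818286 := le_of_lt Real.exp_one_lt_d9
        _ ≤ (3:ℝ) := by norm_num
        _ ≤ (n:ℝ) := by exact_mod_cast (by omega : 3 ≤ n)
    have hHn : mhn (n-1) 1 ≤ 2 * Real.log n := by
      calc mhn (n-1) 1 ≤ 1 + Real.log ((n-1:ℕ):ℝ) := Hs_le_log (n-1) (by omega)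
        _ ≤ 1 + Real.log n := by
            have : ((n-1:ℕ):ℝ) ≤ (n:ℝ) := by exact_mod_cast Nat.sub_le n 1
            have h0 : (0:ℝ) < ((n-1:ℕ):ℝ) := by exact_mod_cast (by omega : 0 < n - 1)
            linarith [Real.log_le_log h0 this]
        _ ≤ 2 * Real.log n := by linarith
    have hfp : (1:ℝ) ≤ (m.factorial : ℝ) := Nat.one_le_cast.mpr (Nat.factorial_pos m)
    have hHnonneg : 0 ≤ mhn (n-1) 1 := mhn_nonneg _ _
    calc mhn (n-1) m / (n:ℝ) ≤ (mhn (n-1) 1 ^ m / (m.factorial : ℝ)) / (n:ℝ) :=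
          (div_le_div_iff_of_pos_right hn0).mpr (mhn_ub m (n-1))
      _ ≤ mhn (n-1) 1 ^ m / (n:ℝ) :=
          (div_le_div_iff_of_pos_right hn0).mpr (div_le_self (by positivity) hfp)
      _ ≤ (2 * Real.log n) ^ m / (n:ℝ) :=
          (div_le_div_iff_of_pos_right hn0).mpr (pow_le_pow_left₀ hHnonneg hHn m)
      _ = (2:ℝ)^m * (Real.log n ^ m / (n:ℝ)) := by rw [mul_pow]; ring

lemma div_step (X Y : ℝ) (k : ℕ) (hX : 0 ≤ X) (hY : 0 ≤ Y) (hYX : Y ≤ X) :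
    (X + 1 / ((k:ℝ) + 1) * Y) / ((k:ℝ) + 2) ≤ X / ((k:ℝ) + 1) := by
  rw [div_le_div_iff₀ (by positivity) (by positivity)]
  have h1 : 1 / ((k:ℝ) + 1) * Y * ((k:ℝ) + 1) = Y := by field_simp
  nlinarith [h1]


theorem stmt_5 (m : ℕ) :
    Tendsto (fun N : ℕ => ∑ n ∈ Finset.Icc 1 N, (-1 : ℝ) ^ n / (n : ℝ) * mhn (n - 1) m)
      atTop
      (nhds ((-1 : ℝ) ^ (m + 1) * (Real.log 2) ^ (m + 1) / (Nat.factorial (m + 1) : ℝ))) := by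
  set f : ℕ → ℝ := fun n => (-1 : ℝ) ^ n / (n : ℝ) * mhn (n - 1) m with hf
  set b : ℕ → ℝ := fun n => mhn (n - 1) m / (n : ℝ) with hb
  have hfb : ∀ n : ℕ, f n = (-1 : ℝ) ^ n * b n := fun n => by rw [hf, hb]; ring
  -- threshold for antitonicity
  obtain ⟨K, hK⟩ := eventually_atTop.mp (Hs_tendsto.eventually_ge_atTop ((m:ℝ) * 2 ^ m))
  set N0 : ℕ := K + 1 with hN0
  have hanti : Antitone fun i => b (i + N0) := by
    apply antitone_nat_of_succ_le
    intro i
    have harith1 : i + 1 + N0 = (i + K) + 2 := by omega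
    have harith2 : i + N0 = (i + K) + 1 := by omega
    rw [harith1, harith2]
    set k := i + K with hk
    show mhn ((k+2) - 1) m / ((k+2 : ℕ) : ℝ) ≤ mhn ((k+1) - 1) m / ((k+1 : ℕ) : ℝ)
    have e1 : (k+2) - 1 = k + 1 := by omega
    have e2 : (k+1) - 1 = k := by omega
    rw [e1, e2]
    match m with
    | 0 =>
      rw [mhn_zero, mhn_zero]
      apply one_div_le_one_div_of_le
      · exact_mod_cast Nat.succ_pos k
      · exact_mod_cast (by omega : k + 1 ≤ k + 2)
    | M + 1 =>
      have hthr : ((M:ℝ) + 1) * 2 ^ (M + 1) ≤ mhn k 1 := by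
        have := hK k (by omega)
        push_cast at this ⊢
        linarith
      have hlev : mhn k M ≤ mhn k (M + 1) := mhn_level_mono M k hthr
      rw [mhn_succ_left]
      push_cast
      exact div_step (mhn k (M+1)) (mhn k M) k (mhn_nonneg _ _) (mhn_nonneg _ _) hlev
  have hb0 : Tendsto (fun i => b (i + N0)) atTop (𝓝 0) :=
    (b_tendsto m).comp (tendsto_add_atTop_nat N0)
  obtain ⟨l0, hl0⟩ := hanti.tendsto_alternating_series_of_tendsto_zero hb0
  set S : ℕ → ℝ := fun n => ∑ i ∈ Finset.range n, f i with hSdef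
  set l : ℝ := S N0 + (-1 : ℝ) ^ N0 * l0 with hl
  have hSshift : ∀ n : ℕ, S (N0 + n)
      = S N0 + (-1 : ℝ) ^ N0 * ∑ i ∈ Finset.range n, (-1 : ℝ) ^ i * b (i + N0) := by
    intro n
    rw [hSdef]
    simp only
    rw [Finset.sum_range_add, Finset.mul_sum]
    congr 1
    refine Finset.sum_congr rfl fun i _ => ?_
    rw [hfb, pow_add, Nat.add_comm N0 i]
    ring
  have hS : Tendsto (fun n => S n) atTop (𝓝 l) := by
    have h4 : Tendsto (fun n => S N0 + (-1 : ℝ) ^ N0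
        * ∑ i ∈ Finset.range n, (-1 : ℝ) ^ i * b (i + N0)) atTop (𝓝 l) := by
      rw [hl]
      exact ((hl0.const_mul _).const_add _)
    have h5 : Tendsto (fun n => S (n + N0)) atTop (𝓝 l) := by
      refine (h4.congr fun n => ?_)
      rw [← hSshift n, Nat.add_comm]
    exact (tendsto_add_atTop_iff_nat N0).mp h5
  have hAbel : Tendsto (fun x : ℝ => ∑' n : ℕ, f n * x ^ n) (𝓝[<] 1) (𝓝 l) :=
    Real.tendsto_tsum_powerSeries_nhdsWithin_lt hS
  have hEq : (fun x : ℝ => (-Real.log (1 + x)) ^ (m+1) / (((m+1).factorial : ℕ) : ℝ))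
      =ᶠ[𝓝[<] (1:ℝ)] fun x : ℝ => ∑' n : ℕ, f n * x ^ n := by
    filter_upwards [Ioo_mem_nhdsLT_of_mem
      (show (1:ℝ) ∈ Set.Ioc 0 1 from ⟨zero_lt_one, le_refl 1⟩)] with x hx
    have hx1 : |(-x)| < 1 := by
      rw [abs_neg, abs_of_pos hx.1]; exact hx.2
    have h := hasSum_mhn m (-x) hx1
    rw [sub_neg_eq_add] at h
    have h2 : (fun n : ℕ => (-x) ^ n / (n : ℝ) * mhn (n - 1) m)
        = fun n : ℕ => f n * x ^ n := by
      funext n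
      rw [hf]
      simp only
      rw [neg_pow]
      ring
    rw [h2] at h
    exact (h.tsum_eq).symm
  have hca : ContinuousAt
      (fun x : ℝ => (-Real.log (1 + x)) ^ (m+1) / (((m+1).factorial : ℕ) : ℝ)) 1 := by
    have h1 : ContinuousAt (fun x : ℝ => (1:ℝ) + x) 1 :=
      continuousAt_const.add continuousAt_id
    have h2 : ContinuousAt (fun x : ℝ => Real.log (1 + x)) 1 :=
      h1.log (by norm_num)
    exact (h2.neg.pow (m+1)).div_const _
  have hG : Tendsto (fun x : ℝ => (-Real.log (1 + x)) ^ (m+1) / (((m+1).factorial : ℕ) : ℝ))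
      (𝓝[<] (1:ℝ)) (𝓝 ((-Real.log 2) ^ (m+1) / (((m+1).factorial : ℕ) : ℝ))) := by
    have := hca.continuousWithinAt (s := Set.Iio 1)
    have hval : (-Real.log (1 + (1:ℝ))) ^ (m+1) / (((m+1).factorial : ℕ) : ℝ)
        = (-Real.log 2) ^ (m+1) / (((m+1).factorial : ℕ) : ℝ) := by norm_num
    rw [ContinuousWithinAt] at this
    simpa [hval] using this
  have hlim2 : Tendsto (fun x : ℝ => ∑' n : ℕ, f n * x ^ n) (𝓝[<] (1:ℝ))
      (𝓝 ((-Real.log 2) ^ (m+1) / (((m+1).factorial : ℕ) : ℝ))) :=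
    hG.congr' hEq
  have huniq : l = (-Real.log 2) ^ (m+1) / (((m+1).factorial : ℕ) : ℝ) :=
    tendsto_nhds_unique hAbel hlim2
  have hvalue : (-Real.log 2) ^ (m+1) / (((m+1).factorial : ℕ) : ℝ)
      = (-1 : ℝ) ^ (m + 1) * (Real.log 2) ^ (m + 1) / ((Nat.factorial (m + 1) : ℕ) : ℝ) := by
    rw [neg_pow]
  have hIcc : ∀ N : ℕ, ∑ n ∈ Finset.Icc 1 N, f n = S (N + 1) := by
    intro N
    rw [hSdef]
    simp only
    rw [Finset.sum_range_succ', sum_Icc_one]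
    have hf0 : f 0 = 0 := by rw [hf]; norm_num
    rw [hf0, add_zero]
  have hfinal : Tendsto (fun N : ℕ => ∑ n ∈ Finset.Icc 1 N, f n) atTop (𝓝 l) := by
    refine ((hS.comp (tendsto_add_atTop_nat 1)).congr fun N => ?_)
    exact (hIcc N).symm
  rw [huniq, hvalue] at hfinal
  exact hfinal
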